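/- Let N ≥ 2 and let a = (a_n)_{n∈ℤ/2Nℤ} and ā = (ā_n)_{n∈ℤ/2Nℤ} be families of positive reals related by the discrete periodic Toda lattice equations. Then for every 1 ≤ k ≤ N, the quantity h_k := Σ over all cyclically sparse subsets S of ℤ/2Nℤ with |S| = k of ∏_{i∈S} a_i is conserved, i.e. Σ_{S} ∏_{i∈S} ā_i = Σ_{S} ∏_{i∈S} a_i; moreover h_{N+1} := ∏_{i∈ℤ/2Nℤ} a_i is conserved, i.e. ∏_i ā_i = ∏_i a_i. -/

import Mathlib

/-- The `k`-th conserved quantity of the discrete periodic Toda lattice: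
the sum, over all cyclically sparse subsets `S ⊆ ℤ/2Nℤ` (no two elements adjacent on the
cycle, i.e. `i ∈ S → i + 1 ∉ S`) with `|S| = k`, of `∏_{i ∈ S} a i`. -/
noncomputable def hCons (N : ℕ) [NeZero (2 * N)] (a : ZMod (2 * N) → ℝ) (k : ℕ) : ℝ :=
  ∑ S ∈ Finset.univ.powerset.filter
      (fun S : Finset (ZMod (2 * N)) => S.card = k ∧ ∀ i ∈ S, i + 1 ∉ S),
    ∏ i ∈ S, a i


open Polynomial Matrix Finset

namespace TodaAux

def pathSet (m : ℕ) (r c : Fin 2) : Finset (Finset ℕ) :=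
  (Finset.range m).powerset.filter fun S =>
    (∀ i ∈ S, i+1 ∉ S) ∧ (r = 1 → 0 ∉ S) ∧ (m - 1 ∈ S ↔ c = 1)

noncomputable def pathSum (w : ℕ → ℝ[X]) (m : ℕ) (r c : Fin 2) : ℝ[X] :=
  ∑ S ∈ pathSet m r c, ∏ i ∈ S, w i

lemma pathSet_succ_zero (m : ℕ) (r : Fin 2) :
    pathSet (m+1) r 0 = pathSet m r 0 ∪ pathSet m r 1 := by
  ext S
  simp only [pathSet, mem_filter, mem_powerset, mem_union]
  constructor
  · rintro ⟨hsub, hsp, hr, hlast⟩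
    simp only [Nat.add_sub_cancel] at hlast
    have hmS : m ∉ S := by
      intro h; exact absurd (hlast.mp h) (by decide)
    have hsub' : S ⊆ Finset.range m := by
      intro i hi
      have := hsub hi
      simp only [mem_range] at this ⊢
      rcases Nat.lt_succ_iff_lt_or_eq.mp this with h | h
      · exact h
      · exact absurd (h ▸ hi) hmS
    by_cases hc : m - 1 ∈ S
    · right; exact ⟨hsub', hsp, hr, by simpa using hc⟩
    · left
      refine ⟨hsub', hsp, hr, ?_⟩
      simp only [hc, false_iff]
      decide
  · rintro (⟨hsub, hsp, hr, hlast⟩ | ⟨hsub, hsp, hr, hlast⟩) <;>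
    · have hmS : m ∉ S := fun h => by simpa using hsub h
      refine ⟨hsub.trans (by simp [Finset.range_subset]; intro x hx; omega), hsp, hr, ?_⟩
      simp only [Nat.add_sub_cancel, hmS, false_iff]
      decide

lemma pathSet_disj (m : ℕ) (r : Fin 2) : Disjoint (pathSet m r 0) (pathSet m r 1) := by
  rw [Finset.disjoint_left]
  intro S h0 h1
  simp only [pathSet, mem_filter] at h0 h1
  exact absurd (h0.2.2.2.mp (h1.2.2.2.mpr (by trivial))) (by decide)

lemma pathSum_succ_zero (w : ℕ → ℝ[X]) (m : ℕ) (r : Fin 2) :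
    pathSum w (m+1) r 0 = pathSum w m r 0 + pathSum w m r 1 := by
  rw [pathSum, pathSet_succ_zero, Finset.sum_union (pathSet_disj m r)]; rfl

lemma pathSum_succ_one (w : ℕ → ℝ[X]) (m : ℕ) (hm : 1 ≤ m) (r : Fin 2) :
    pathSum w (m+1) r 1 = pathSum w m r 0 * w m := by
  rw [pathSum, pathSum, Finset.sum_mul]
  refine Finset.sum_bij' (fun S _ => S.erase m) (fun S _ => insert m S) ?_ ?_ ?_ ?_ ?_
  · -- maps to
    intro S hS
    simp only [pathSet, mem_filter, mem_powerset, Nat.add_sub_cancel] at hS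
    obtain ⟨hsub, hsp, hr, hlast⟩ := hS
    have hmS : m ∈ S := hlast.mpr trivial
    have hm1 : m - 1 ∉ S := by
      intro h
      have := hsp _ h
      rw [Nat.sub_add_cancel hm] at this
      exact this hmS
    simp only [pathSet, mem_filter, mem_powerset]
    refine ⟨?_, ?_, ?_, ?_⟩
    · intro i hi
      rcases Finset.mem_erase.mp hi with ⟨hne, hiS⟩
      have := hsub hiS
      simp only [mem_range] at this ⊢
      omega
    · intro i hi
      exact fun h => hsp i (Finset.mem_of_mem_erase hi) (Finset.mem_of_mem_erase h)
    · intro h1 h0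
      exact hr h1 (Finset.mem_of_mem_erase h0)
    · constructor
      · intro h; exact absurd (Finset.mem_of_mem_erase h) hm1
      · intro h; exact absurd h (by decide)
  · -- maps back
    intro S hS
    simp only [pathSet, mem_filter, mem_powerset, Nat.add_sub_cancel] at hS ⊢
    obtain ⟨hsub, hsp, hr, hlast⟩ := hS
    have hm1 : m - 1 ∉ S := by
      intro h; exact absurd (hlast.mp h) (by decide)
    have hmS : m ∉ S := fun h => by simpa using hsub h
    refine ⟨?_, ?_, ?_, ?_⟩
    · intro i hi
      rcases Finset.mem_insert.mp hi with h | h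
      · simp [h]
      · have := hsub h; simp only [mem_range] at this ⊢; omega
    · intro i hi
      rcases Finset.mem_insert.mp hi with h | h
      · subst h
        intro hc
        rcases Finset.mem_insert.mp hc with h' | h'
        · omega
        · have := hsub h'; simp only [mem_range] at this; omega
      · intro hc
        rcases Finset.mem_insert.mp hc with h' | h'
        · have hieq : i = m - 1 := by omega
          exact hm1 (hieq ▸ h)
        · exact hsp i h h'
    · intro h1 h0
      rcases Finset.mem_insert.mp h0 with h | h
      · omega
      · exact hr h1 h
    · simp
  · intro S hS
    simp only [pathSet, mem_filter, mem_powerset, Nat.add_sub_cancel] at hS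
    exact Finset.insert_erase (hS.2.2.2.mpr trivial)
  · intro S hS
    simp only [pathSet, mem_filter, mem_powerset, Nat.add_sub_cancel] at hS
    have hmS : m ∉ S := fun h => by simpa using hS.1 h
    exact Finset.erase_insert hmS
  · intro S hS
    simp only [pathSet, mem_filter, mem_powerset, Nat.add_sub_cancel] at hS
    have hmS : m ∈ S := hS.2.2.2.mpr trivial
    rw [← Finset.mul_prod_erase S w hmS, mul_comm]

noncomputable def Tm (c : ℝ[X]) : Matrix (Fin 2) (Fin 2) ℝ[X] := !![1, c; 1, 0]

noncomputable def prodT (w : ℕ → ℝ[X]) : ℕ → Matrix (Fin 2) (Fin 2) ℝ[X]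
  | 0 => 1
  | m+1 => prodT w m * Tm (w m)

lemma mul_Tm_zero (A : Matrix (Fin 2) (Fin 2) ℝ[X]) (c : ℝ[X]) (r : Fin 2) :
    (A * Tm c) r 0 = A r 0 + A r 1 := by
  simp [Tm, Matrix.mul_apply, Fin.sum_univ_two]

lemma mul_Tm_one (A : Matrix (Fin 2) (Fin 2) ℝ[X]) (c : ℝ[X]) (r : Fin 2) :
    (A * Tm c) r 1 = A r 0 * c := by
  simp [Tm, Matrix.mul_apply, Fin.sum_univ_two]

lemma pathSum_one (w : ℕ → ℝ[X]) (r c : Fin 2) :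
    pathSum w 1 r c = Tm (w 0) r c := by
  have h : pathSet 1 r c = if c = 0 then {(∅ : Finset ℕ)}
      else if r = 0 then {({0} : Finset ℕ)} else ∅ := by
    ext S
    simp only [pathSet, mem_filter, mem_powerset, Finset.range_one,
      Finset.subset_singleton_iff]
    fin_cases r <;> fin_cases c <;>
      simp_all <;>
      · constructor
        · rintro ⟨(rfl | rfl), h2, h3⟩ <;> simp_all
        · rintro rfl <;> simp_all
  fin_cases r <;> fin_cases c <;>
    simp_all [Fin.mk_zero, Fin.mk_one, pathSum, Tm]

lemma prodT_entry (w : ℕ → ℝ[X]) (m : ℕ) (hm : 1 ≤ m) (r c : Fin 2) :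
    prodT w m r c = pathSum w m r c := by
  induction m, hm using Nat.le_induction generalizing r c with
  | base =>
    have h1 : prodT w 1 = Tm (w 0) := by
      show (1 : Matrix (Fin 2) (Fin 2) ℝ[X]) * Tm (w 0) = Tm (w 0)
      rw [one_mul]
    rw [h1, pathSum_one]
  | succ m hm ih =>
    show (prodT w m * Tm (w m)) r c = _
    fin_cases c <;> simp only [Fin.mk_zero, Fin.mk_one]
    · rw [mul_Tm_zero, ih r 0, ih r 1, pathSum_succ_zero]
    · rw [mul_Tm_one, ih r 0, pathSum_succ_one w m hm]

lemma pathSet_disj' (m : ℕ) : Disjoint (pathSet m 0 0) (pathSet m 1 1) := by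
  rw [Finset.disjoint_left]
  intro S h0 h1
  simp only [pathSet, mem_filter] at h0 h1
  exact absurd (h0.2.2.2.mp (h1.2.2.2.mpr trivial)) (by decide)

lemma mem_pathUnion (m : ℕ) (S : Finset ℕ) :
    S ∈ pathSet m 0 0 ∪ pathSet m 1 1 ↔
      S ⊆ Finset.range m ∧ (∀ i ∈ S, i+1 ∉ S) ∧ ¬(0 ∈ S ∧ m - 1 ∈ S) := by
  simp only [mem_union, pathSet, mem_filter, mem_powerset]
  constructor
  · rintro (⟨hsub, hsp, _, hlast⟩ | ⟨hsub, hsp, hr, hlast⟩)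
    · have : m - 1 ∉ S := fun h => absurd (hlast.mp h) (by decide)
      exact ⟨hsub, hsp, fun hc => this hc.2⟩
    · exact ⟨hsub, hsp, fun hc => hr trivial hc.1⟩
  · rintro ⟨hsub, hsp, hc⟩
    by_cases h : m - 1 ∈ S
    · right
      refine ⟨hsub, hsp, fun _ h0 => hc ⟨h0, h⟩, ?_⟩
      simp [h]
    · left
      refine ⟨hsub, hsp, fun hcon => absurd hcon (by decide), ?_⟩
      simp only [h, false_iff]
      decide

section ZModStuff

variable (N : ℕ) [NeZero (2 * N)]

lemma cast_inj_on_range {x y : ℕ} (hx : x < 2*N) (hy : y < 2*N)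
    (h : (x : ZMod (2*N)) = (y : ZMod (2*N))) : x = y := by
  have := congrArg ZMod.val h
  rwa [ZMod.val_cast_of_lt hx, ZMod.val_cast_of_lt hy] at this

lemma trace_prodT (hN : 1 ≤ N) (g : ZMod (2*N) → ℝ) :
    (prodT (fun i => X * C (g (i : ZMod (2*N)))) (2*N)).trace
      = ∑ S ∈ Finset.univ.powerset.filter
          (fun S : Finset (ZMod (2*N)) => ∀ i ∈ S, i + 1 ∉ S),
          C (∏ i ∈ S, g i) * X ^ S.card := by
  have hm : 1 ≤ 2*N := by omega
  have hm2 : 2 ≤ 2*N := by omega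
  set w : ℕ → ℝ[X] := fun i => X * C (g (i : ZMod (2*N))) with hw
  rw [Matrix.trace_fin_two, prodT_entry w _ hm, prodT_entry w _ hm]
  rw [pathSum, pathSum, ← Finset.sum_union (pathSet_disj' (2*N))]
  refine Finset.sum_nbij' (fun S => S.image (Nat.cast : ℕ → ZMod (2*N)))
    (fun S => S.image ZMod.val) ?_ ?_ ?_ ?_ ?_
  · -- membership forward
    intro S hS
    rw [mem_pathUnion] at hS
    obtain ⟨hsub, hsp, hc⟩ := hS
    simp only [mem_filter, mem_powerset]
    refine ⟨Finset.subset_univ _, ?_⟩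
    intro j hj hj1
    rcases Finset.mem_image.mp hj with ⟨i, hiS, rfl⟩
    rcases Finset.mem_image.mp hj1 with ⟨i', hi'S, hi'⟩
    have hi_lt : i < 2*N := Finset.mem_range.mp (hsub hiS)
    have hi'_lt : i' < 2*N := Finset.mem_range.mp (hsub hi'S)
    have hcast : ((i+1 : ℕ) : ZMod (2*N)) = (i' : ZMod (2*N)) := by
      push_cast; rw [hi']
    by_cases h : i + 1 < 2*N
    · have : i + 1 = i' := cast_inj_on_range N h hi'_lt hcast
      exact hsp i hiS (this ▸ hi'S)
    · have hieq : i + 1 = 2*N := by omega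
      have h0 : ((i+1 : ℕ) : ZMod (2*N)) = 0 := by rw [hieq]; exact_mod_cast ZMod.natCast_self (2*N)
      have : (0:ℕ) = i' := cast_inj_on_range N (by omega) hi'_lt (by rw [← hcast, h0]; simp)
      have hi2 : i = 2*N - 1 := by omega
      exact hc ⟨this ▸ hi'S, hi2 ▸ hiS⟩
  · -- membership backward
    intro S hS
    simp only [mem_filter, mem_powerset] at hS
    have hsp := hS.2
    rw [mem_pathUnion]
    refine ⟨?_, ?_, ?_⟩
    · intro i hi
      rcases Finset.mem_image.mp hi with ⟨j, _, rfl⟩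
      exact Finset.mem_range.mpr (ZMod.val_lt j)
    · intro i hi hi1
      rcases Finset.mem_image.mp hi with ⟨j, hjS, rfl⟩
      rcases Finset.mem_image.mp hi1 with ⟨k, hkS, hk⟩
      have : k = j + 1 := by
        have h1 : k = ((j.val + 1 : ℕ) : ZMod (2*N)) := by
          rw [← hk]; exact (ZMod.natCast_rightInverse k).symm
        rw [h1]; push_cast
        rw [ZMod.natCast_rightInverse j]
      exact hsp j hjS (this ▸ hkS)
    · rintro ⟨h0, hlast⟩
      rcases Finset.mem_image.mp h0 with ⟨k, hkS, hk⟩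
      rcases Finset.mem_image.mp hlast with ⟨j, hjS, hj⟩
      have hk0 : k = 0 := by
        rw [← ZMod.natCast_rightInverse k, hk, Nat.cast_zero]
      have : j + 1 = k := by
        rw [hk0]
        have : j = ((2*N - 1 : ℕ) : ZMod (2*N)) := by
          rw [← ZMod.natCast_rightInverse j, hj]
        rw [this]
        have : ((2*N - 1 : ℕ) : ZMod (2*N)) + 1 = ((2*N - 1 + 1 : ℕ) : ZMod (2*N)) := by push_cast; ring
        rw [this, Nat.sub_add_cancel hm]
        exact_mod_cast ZMod.natCast_self (2*N)
      exact hsp j hjS (this ▸ hkS)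
  · -- left inverse
    intro S hS
    rw [mem_pathUnion] at hS
    show Finset.image ZMod.val (Finset.image Nat.cast S) = S
    rw [Finset.image_image]
    refine Finset.image_congr ?_ |>.trans Finset.image_id
    intro i hi
    exact ZMod.val_cast_of_lt (Finset.mem_range.mp (hS.1 hi))
  · -- right inverse
    intro S hS
    show Finset.image Nat.cast (Finset.image ZMod.val S) = S
    rw [Finset.image_image]
    refine Finset.image_congr ?_ |>.trans Finset.image_id
    intro j _
    exact ZMod.natCast_rightInverse j
  · -- values
    intro S hS
    rw [mem_pathUnion] at hS
    have hinj : Set.InjOn (Nat.cast : ℕ → ZMod (2*N)) S := by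
      intro x hx y hy hxy
      exact cast_inj_on_range N (Finset.mem_range.mp (hS.1 hx))
        (Finset.mem_range.mp (hS.1 hy)) hxy
    rw [Finset.prod_image hinj, Finset.card_image_of_injOn hinj]
    rw [Finset.prod_mul_distrib, Finset.prod_const, map_prod]
    ring

end ZModStuff

lemma local_lax (b₁ b₂ a₂ a₃ c' d' e f : ℝ)
    (h1 : b₂ * c' = a₂ - b₁) (h2 : b₂ * d' = a₃) (h3 : e + f = 1) (h4 : e * a₂ = a₂ - b₁) :
    Tm (X * C b₁) * Tm (X * C b₂) * !![1, 0; C c', C d'] =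
      !![1, 0; C e, C f] * (Tm (X * C a₂) * Tm (X * C a₃)) := by
  have H1 : (C b₂ : ℝ[X]) * C c' = C a₂ - C b₁ := by rw [← C_mul, ← C_sub, h1]
  have H2 : (C b₂ : ℝ[X]) * C d' = C a₃ := by rw [← C_mul, h2]
  have H3 : (C e : ℝ[X]) + C f = 1 := by rw [← C_add, h3, C_1]
  have H4 : (C e : ℝ[X]) * C a₂ = C a₂ - C b₁ := by rw [← C_mul, ← C_sub, h4]
  refine Matrix.ext fun i j => ?_
  fin_cases i <;> fin_cases j <;>
    · simp [Tm, Matrix.mul_apply, Fin.sum_univ_two]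
      first
      | linear_combination X * H1
      | linear_combination X * H2
      | linear_combination X * H1 + H3
      | linear_combination X * H2 + X * C a₃ * H3
      | linear_combination X * H1 - X * H4 + H3 + X * C a₂ * H3
      | linear_combination X * H1 - X * H4 - H3
      | linear_combination X * H1 - X * H4 + H3
      | linear_combination X * H2 - X * C a₃ * H3
      | linear_combination X * H2 + X * C a₃ * H3
      | ring

lemma Pinv (d : ℝ) (hd : d ≠ 0) :
    (!![1, 0; C (1-d), C d] : Matrix (Fin 2) (Fin 2) ℝ[X]) * !![1, 0; C (1 - d⁻¹), C d⁻¹] = 1 := by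
  have H : (C d : ℝ[X]) * C d⁻¹ = 1 := by rw [← C_mul, mul_inv_cancel₀ hd, C_1]
  refine Matrix.ext fun i j => ?_
  fin_cases i <;> fin_cases j <;>
    simp [Matrix.mul_apply, Fin.sum_univ_two, Matrix.one_apply] <;>
    first
    | linear_combination H
    | linear_combination -H

lemma prodT_succ (w : ℕ → ℝ[X]) (m : ℕ) : prodT w (m+1) = prodT w m * Tm (w m) := rfl

lemma prodT_shift (w : ℕ → ℝ[X]) : ∀ m, prodT w (m+1) = Tm (w 0) * prodT (fun i => w (i+1)) m
  | 0 => by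
    show (1 : Matrix (Fin 2) (Fin 2) ℝ[X]) * Tm (w 0) = Tm (w 0) * 1
    rw [one_mul, mul_one]
  | (m+1) => by
    rw [prodT_succ, prodT_shift w m, prodT_succ, mul_assoc]

lemma prod_range_pair {M : Type*} [CommMonoid M] (f : ℕ → M) (n : ℕ) :
    ∏ i ∈ Finset.range (2*n), f i = ∏ k ∈ Finset.range n, (f (2*k) * f (2*k+1)) := by
  induction n with
  | zero => simp
  | succ n ih =>
    rw [show 2*(n+1) = (2*n+1)+1 by ring, Finset.prod_range_succ, Finset.prod_range_succ,
      ih, Finset.prod_range_succ, mul_assoc]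

section Main

variable (N : ℕ) [NeZero (2 * N)]

lemma prod_zmod (f : ZMod (2*N) → ℝ) :
    ∏ i ∈ Finset.range (2*N), f (i : ZMod (2*N)) = ∏ j : ZMod (2*N), f j := by
  refine Finset.prod_bij (fun n _ => (n : ZMod (2*N))) (fun n _ => Finset.mem_univ _)
    ?_ ?_ (fun n _ => rfl)
  · intro x hx y hy h
    exact cast_inj_on_range N (Finset.mem_range.mp hx) (Finset.mem_range.mp hy) h
  · intro j _
    exact ⟨j.val, Finset.mem_range.mpr (ZMod.val_lt j), ZMod.natCast_rightInverse j⟩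

variable (a abar : ZMod (2 * N) → ℝ)

noncomputable def wA : ℕ → ℝ[X] := fun i => X * C (a (i : ZMod (2*N)))
noncomputable def wB : ℕ → ℝ[X] := fun i => X * C (abar ((i : ZMod (2*N)) - 1))
noncomputable def dd (n : ℕ) : ℝ :=
  abar (((2*n : ℕ) : ZMod (2*N)) - 1) / a ((2*n : ℕ) : ZMod (2*N))
noncomputable def Pn (n : ℕ) : Matrix (Fin 2) (Fin 2) ℝ[X] :=
  !![1, 0; C (1 - dd N a abar n), C (dd N a abar n)]

lemma tele (ha : ∀ n, 0 < a n) (habar : ∀ n, 0 < abar n)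
    (hsum : ∀ n : ℤ, abar ((2 * n - 1 : ℤ) : ZMod (2 * N)) + abar ((2 * n : ℤ) : ZMod (2 * N))
      = a ((2 * n : ℤ) : ZMod (2 * N)) + a ((2 * n + 1 : ℤ) : ZMod (2 * N)))
    (hprod : ∀ n : ℤ, abar ((2 * n : ℤ) : ZMod (2 * N)) * abar ((2 * n + 1 : ℤ) : ZMod (2 * N))
      = a ((2 * n + 1 : ℤ) : ZMod (2 * N)) * a ((2 * n + 2 : ℤ) : ZMod (2 * N))) :
    ∀ j : ℕ, prodT (wB N abar) (2*j) * Pn N a abar j = Pn N a abar 0 * prodT (wA N a) (2*j) := by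
  intro j
  induction j with
  | zero =>
    show (1 : Matrix (Fin 2) (Fin 2) ℝ[X]) * Pn N a abar 0 = Pn N a abar 0 * 1
    rw [one_mul, mul_one]
  | succ j ih =>
    set z : ZMod (2*N) := ((j:ℕ) : ZMod (2*N)) with hz
    have hs := hsum (j:ℤ)
    have hp := hprod (j:ℤ)
    push_cast at hs hp
    -- weight identifications
    have e1 : wB N abar (2*j) = X * C (abar (2*z - 1)) := by
      show X * C (abar (((2*j : ℕ) : ZMod (2*N)) - 1)) = _
      have : ((2*j : ℕ) : ZMod (2*N)) = 2*z := by push_cast; ring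
      rw [this]
    have e2 : wB N abar (2*j+1) = X * C (abar (2*z)) := by
      show X * C (abar (((2*j+1 : ℕ) : ZMod (2*N)) - 1)) = _
      have : ((2*j+1 : ℕ) : ZMod (2*N)) - 1 = 2*z := by push_cast; ring
      rw [this]
    have e3 : wA N a (2*j) = X * C (a (2*z)) := by
      show X * C (a ((2*j : ℕ) : ZMod (2*N))) = _
      have : ((2*j : ℕ) : ZMod (2*N)) = 2*z := by push_cast; ring
      rw [this]
    have e4 : wA N a (2*j+1) = X * C (a (2*z+1)) := by
      show X * C (a ((2*j+1 : ℕ) : ZMod (2*N))) = _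
      have : ((2*j+1 : ℕ) : ZMod (2*N)) = 2*z+1 := by push_cast; ring
      rw [this]
    have hdd1 : dd N a abar (j+1) = abar (2*z+1) / a (2*z+2) := by
      unfold dd
      have h1 : ((2*(j+1) : ℕ) : ZMod (2*N)) - 1 = 2*z+1 := by push_cast; ring
      have h2 : ((2*(j+1) : ℕ) : ZMod (2*N)) = 2*z+2 := by push_cast; ring
      rw [h1, h2]
    have hdd0 : dd N a abar j = abar (2*z-1) / a (2*z) := by
      unfold dd
      have h1 : ((2*j : ℕ) : ZMod (2*N)) - 1 = 2*z-1 := by push_cast; ring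
      have h2 : ((2*j : ℕ) : ZMod (2*N)) = 2*z := by push_cast; ring
      rw [h1, h2]
    have hA2 : a (2*z) ≠ 0 := ne_of_gt (ha _)
    have hA4 : a (2*z+2) ≠ 0 := ne_of_gt (ha _)
    have key : Tm (wB N abar (2*j)) * Tm (wB N abar (2*j+1)) * Pn N a abar (j+1)
        = Pn N a abar j * (Tm (wA N a (2*j)) * Tm (wA N a (2*j+1))) := by
      rw [e1, e2, e3, e4]
      show _ = !![1, 0; C (1 - dd N a abar j), C (dd N a abar j)] * _
      rw [show Pn N a abar (j+1) =
        !![1, 0; C (1 - dd N a abar (j+1)), C (dd N a abar (j+1))] from rfl, hdd1, hdd0]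
      apply local_lax
      · -- abar (2z) * (1 - abar(2z+1)/a(2z+2)) = a (2z) - abar (2z-1)
        field_simp
        first
        | linear_combination a (2*z+2) * hs - hp
        | linear_combination a (2*z+2) * hs + hp
        | linear_combination - a (2*z+2) * hs - hp
        | linear_combination - a (2*z+2) * hs + hp
      · field_simp
        first
        | linear_combination hp
        | linear_combination -hp
      · ring
      · field_simp
    have expand : ∀ (w : ℕ → ℝ[X]), prodT w (2*(j+1)) = prodT w (2*j) * Tm (w (2*j)) * Tm (w (2*j+1)) := by
      intro w
      rw [show 2*(j+1) = (2*j+1)+1 by ring, prodT_succ, prodT_succ]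
    rw [expand, expand, mul_assoc (prodT (wB N abar) (2*j)), mul_assoc (prodT (wB N abar) (2*j)),
      key, ← mul_assoc, ih]
    simp only [mul_assoc]

lemma trace_rot (hN : 1 ≤ N) :
    (prodT (wB N abar) (2*N)).trace
      = (prodT (fun i => X * C (abar ((i : ℕ) : ZMod (2*N)))) (2*N)).trace := by
  obtain ⟨m, hm⟩ : ∃ m, 2*N = m+1 := ⟨2*N-1, by omega⟩
  have hfun : (fun i => wB N abar (i+1)) = (fun i => X * C (abar ((i : ℕ) : ZMod (2*N)))) := by
    funext i
    show X * C (abar (((i+1 : ℕ) : ZMod (2*N)) - 1)) = _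
    have : ((i+1 : ℕ) : ZMod (2*N)) - 1 = ((i : ℕ) : ZMod (2*N)) := by push_cast; ring
    rw [this]
  have hlast : X * C (abar ((m : ℕ) : ZMod (2*N))) = wB N abar 0 := by
    show _ = X * C (abar (((0:ℕ) : ZMod (2*N)) - 1))
    have h0 : ((m : ℕ) : ZMod (2*N)) + 1 = 0 := by
      have : (((m+1) : ℕ) : ZMod (2*N)) = 0 := by rw [← hm]; exact ZMod.natCast_self _
      push_cast at this
      exact this
    have : ((m : ℕ) : ZMod (2*N)) = ((0:ℕ) : ZMod (2*N)) - 1 := by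
      push_cast
      linear_combination h0
    rw [this]
  have hL : ∀ w : ℕ → ℝ[X], prodT w (2*N) = Tm (w 0) * prodT (fun i => w (i+1)) m := by
    intro w; rw [hm]; exact prodT_shift w m
  have hR : ∀ w : ℕ → ℝ[X], prodT w (2*N) = prodT w m * Tm (w m) := by
    intro w; rw [hm]; exact prodT_succ w m
  rw [hL (wB N abar), hR (fun i => X * C (abar ((i : ℕ) : ZMod (2*N)))), hfun, hlast,
    Matrix.trace_mul_comm]

lemma trace_lax (ha : ∀ n, 0 < a n) (habar : ∀ n, 0 < abar n)
    (hsum : ∀ n : ℤ, abar ((2 * n - 1 : ℤ) : ZMod (2 * N)) + abar ((2 * n : ℤ) : ZMod (2 * N))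
      = a ((2 * n : ℤ) : ZMod (2 * N)) + a ((2 * n + 1 : ℤ) : ZMod (2 * N)))
    (hprod : ∀ n : ℤ, abar ((2 * n : ℤ) : ZMod (2 * N)) * abar ((2 * n + 1 : ℤ) : ZMod (2 * N))
      = a ((2 * n + 1 : ℤ) : ZMod (2 * N)) * a ((2 * n + 2 : ℤ) : ZMod (2 * N))) :
    (prodT (wA N a) (2*N)).trace = (prodT (wB N abar) (2*N)).trace := by
  have ht := tele N a abar ha habar hsum hprod N
  have hPn : Pn N a abar N = Pn N a abar 0 := by
    have hdd : dd N a abar N = dd N a abar 0 := by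
      unfold dd
      have : ((2*N : ℕ) : ZMod (2*N)) = ((2*0 : ℕ) : ZMod (2*N)) := by
        rw [ZMod.natCast_self]; simp
      rw [this]
    unfold Pn; rw [hdd]
  rw [hPn] at ht
  set d := dd N a abar 0 with hd'
  have hd : d ≠ 0 := by
    rw [hd']; unfold dd
    exact div_ne_zero (ne_of_gt (habar _)) (ne_of_gt (ha _))
  set Q : Matrix (Fin 2) (Fin 2) ℝ[X] := !![1, 0; C (1 - d⁻¹), C d⁻¹] with hQ
  have hPQ : Pn N a abar 0 * Q = 1 := Pinv d hd
  have hQP : Q * Pn N a abar 0 = 1 := by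
    have := Pinv d⁻¹ (inv_ne_zero hd)
    rwa [inv_inv] at this
  have h5 : prodT (wA N a) (2*N) = Q * (prodT (wB N abar) (2*N) * Pn N a abar 0) := by
    rw [ht, ← mul_assoc, hQP, one_mul]
  rw [h5, Matrix.trace_mul_comm, mul_assoc, hPQ, mul_one]

end Main

lemma hCons_coeff (N : ℕ) [NeZero (2*N)] (g : ZMod (2*N) → ℝ) (k : ℕ) :
    hCons N g k
      = (∑ S ∈ Finset.univ.powerset.filter
            (fun S : Finset (ZMod (2*N)) => ∀ i ∈ S, i + 1 ∉ S),
          C (∏ i ∈ S, g i) * X ^ S.card).coeff k := by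
  rw [Polynomial.finset_sum_coeff]
  simp only [Polynomial.coeff_C_mul, Polynomial.coeff_X_pow, mul_ite, mul_one, mul_zero]
  rw [← Finset.sum_filter]
  unfold hCons
  apply Finset.sum_congr _ (fun _ _ => rfl)
  rw [Finset.filter_filter]
  apply Finset.filter_congr
  intro S _
  simp only [eq_comm, and_comm]

theorem toda_conserved' (N : ℕ) (hN : 2 ≤ N) [NeZero (2 * N)] (a abar : ZMod (2 * N) → ℝ)
    (ha : ∀ n, 0 < a n) (habar : ∀ n, 0 < abar n)
    (hsum : ∀ n : ℤ, abar ((2 * n - 1 : ℤ) : ZMod (2 * N)) + abar ((2 * n : ℤ) : ZMod (2 * N))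
      = a ((2 * n : ℤ) : ZMod (2 * N)) + a ((2 * n + 1 : ℤ) : ZMod (2 * N)))
    (hprod : ∀ n : ℤ, abar ((2 * n : ℤ) : ZMod (2 * N)) * abar ((2 * n + 1 : ℤ) : ZMod (2 * N))
      = a ((2 * n + 1 : ℤ) : ZMod (2 * N)) * a ((2 * n + 2 : ℤ) : ZMod (2 * N))) :
    (∀ k, 1 ≤ k → k ≤ N → hCons N abar k = hCons N a k) ∧
      (∏ i : ZMod (2 * N), abar i = ∏ i : ZMod (2 * N), a i) := by
  have hN1 : 1 ≤ N := by omega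
  constructor
  · intro k _ _
    rw [hCons_coeff N abar k, hCons_coeff N a k,
      ← trace_prodT N hN1 abar, ← trace_prodT N hN1 a]
    congr 1
    have hwa : (fun i : ℕ => X * C (a ((i : ℕ) : ZMod (2*N)))) = wA N a := rfl
    rw [← trace_rot N abar hN1, hwa, ← trace_lax N a abar ha habar hsum hprod]
  · calc ∏ i : ZMod (2*N), abar i
        = ∏ i ∈ Finset.range (2*N), abar ((i : ℕ) : ZMod (2*N)) := (prod_zmod N abar).symm
      _ = ∏ k ∈ Finset.range N,
            (abar ((2*k : ℕ) : ZMod (2*N)) * abar ((2*k+1 : ℕ) : ZMod (2*N))) :=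
          prod_range_pair _ N
      _ = ∏ k ∈ Finset.range N,
            (a ((2*k+1 : ℕ) : ZMod (2*N)) * a ((2*k+2 : ℕ) : ZMod (2*N))) := by
          refine Finset.prod_congr rfl fun k _ => ?_
          have hp := hprod (k : ℤ)
          push_cast at hp ⊢
          exact hp
      _ = ∏ i ∈ Finset.range (2*N), a (((i : ℕ) : ZMod (2*N)) + 1) := by
          rw [prod_range_pair (fun i : ℕ => a (((i : ℕ) : ZMod (2*N)) + 1)) N]
          refine Finset.prod_congr rfl fun k _ => ?_
          push_cast
          ring_nf
      _ = ∏ j : ZMod (2*N), a (j + 1) := prod_zmod N (fun j => a (j + 1))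
      _ = ∏ j : ZMod (2*N), a j := Equiv.prod_comp (Equiv.addRight (1 : ZMod (2*N))) a

end TodaAux

/-- For positive states related by the discrete periodic Toda lattice equations, every
`h_k` (`1 ≤ k ≤ N`) is conserved, and so is `h_{N+1} = ∏_i a_i`. -/
theorem toda_conserved (N : ℕ) (hN : 2 ≤ N) [NeZero (2 * N)] (a abar : ZMod (2 * N) → ℝ)
    (ha : ∀ n, 0 < a n) (habar : ∀ n, 0 < abar n)
    (hsum : ∀ n : ℤ, abar ((2 * n - 1 : ℤ) : ZMod (2 * N)) + abar ((2 * n : ℤ) : ZMod (2 * N))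
      = a ((2 * n : ℤ) : ZMod (2 * N)) + a ((2 * n + 1 : ℤ) : ZMod (2 * N)))
    (hprod : ∀ n : ℤ, abar ((2 * n : ℤ) : ZMod (2 * N)) * abar ((2 * n + 1 : ℤ) : ZMod (2 * N))
      = a ((2 * n + 1 : ℤ) : ZMod (2 * N)) * a ((2 * n + 2 : ℤ) : ZMod (2 * N))) :
    (∀ k, 1 ≤ k → k ≤ N → hCons N abar k = hCons N a k) ∧
      (∏ i : ZMod (2 * N), abar i = ∏ i : ZMod (2 * N), a i) :=
  TodaAux.toda_conserved' N hN a abar ha habar hsum hprod
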